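/- Under the standing setup, suppose additionally that L is metabelian (i.e., [[L,L],[L,L]] = 0) and that C_L(x) is nilpotent of class at most d for every nontrivial x ∈ F. Set L'_F = [L,L] ∩ C_L(F) and k = |F \ Z| = p^2 − p. Then for every a ∈ ℤ/pℤ, [L'_F, L_a, …, L_a] = 0, where L_a occurs k(d−1)+1 times in the iterated bracket. -/

import Mathlib

/-- A group is supersolvable if it has a normal series with cyclic factors all of whose terms
are normal in the whole group.  (Using normality of `s i`, cyclicity of the factor
`s (i+1) ⧸ s i` is expressed by `s (i+1) = s i ⊔ ⟨g⟩` for a single element `g`.) -/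
def IsSupersolvable (G : Type*) [Group G] : Prop :=
  ∃ (n : ℕ) (s : ℕ → Subgroup G), s 0 = ⊥ ∧ s n = ⊤ ∧ (∀ i, (s i).Normal) ∧
    ∀ i < n, ∃ g : G, s (i + 1) = s i ⊔ Subgroup.zpowers g

/-- The fixed-point submodule `C_L(S)` of a set `S` of Lie-algebra automorphisms acting on `L`
via `ρ`.  (It is in fact a Lie subalgebra.) -/
def fixSub {A R L : Type*} [Group A] [CommRing R] [LieRing L] [LieAlgebra R L]
    (ρ : A → (L ≃ₗ⁅R⁆ L)) (S : Set A) : Submodule R L where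
  carrier := {x | ∀ g ∈ S, ρ g x = x}
  add_mem' := by
    intro x y hx hy g hg
    calc (ρ g) (x + y) = (ρ g) x + (ρ g) y := (ρ g).toLieHom.map_add x y
    _ = x + y := by rw [hx g hg, hy g hg]
  zero_mem' := fun g _ => (ρ g).toLieHom.map_zero
  smul_mem' := by
    intro r x hx g hg
    calc (ρ g) (r • x) = r • (ρ g) x := (ρ g).toLieHom.map_smul r x
    _ = r • x := by rw [hx g hg]

/-- The eigenspace of a Lie-algebra automorphism `e` for the eigenvalue `μ`. -/
def eigSp {R L : Type*} [CommRing R] [LieRing L] [LieAlgebra R L]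
    (e : L ≃ₗ⁅R⁆ L) (μ : R) : Submodule R L where
  carrier := {x | e x = μ • x}
  add_mem' := by
    intro x y hx hy
    simp only [Set.mem_setOf_eq] at *
    calc e (x + y) = e x + e y := e.toLieHom.map_add x y
    _ = μ • (x + y) := by rw [hx, hy, smul_add]
  zero_mem' := by
    show e 0 = μ • (0 : L)
    rw [smul_zero]; exact e.toLieHom.map_zero
  smul_mem' := by
    intro r x hx
    simp only [Set.mem_setOf_eq] at *
    calc e (r • x) = r • e x := e.toLieHom.map_smul r x
    _ = μ • r • x := by rw [hx, smul_comm]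

/-- `braSpan R S T` is the `R`-submodule `[S, T]` spanned by all brackets `⁅x, y⁆` with
`x ∈ S`, `y ∈ T`. -/
def braSpan (R : Type*) {L : Type*} [CommRing R] [LieRing L] [LieAlgebra R L]
    (S T : Set L) : Submodule R L :=
  Submodule.span R {z | ∃ x ∈ S, ∃ y ∈ T, ⁅x, y⁆ = z}

/-- `iterBra R S T n` is the left-normed iterated bracket `[S, T, …, T]` with `T` occurring
`n` times (for `n = 0` it is the span of `S`).  In particular a subalgebra with underlying
set `C` is nilpotent of class at most `c` if and only if `iterBra R C C c = ⊥`, and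
`iterBra R Set.univ C c` is the span `[L, C, …, C]`. -/
def iterBra (R : Type*) {L : Type*} [CommRing R] [LieRing L] [LieAlgebra R L]
    (S T : Set L) : ℕ → Submodule R L
  | 0 => Submodule.span R S
  | n + 1 => braSpan R ((iterBra R S T n : Submodule R L) : Set L) T

/-- The conjugate subgroup `H^f = f⁻¹ H f`. -/
def conjSubgroup {A : Type*} [Group A] (f : A) (H : Subgroup A) : Subgroup A :=
  Subgroup.map (MulAut.conj f⁻¹).toMonoidHom H

section Helpers

variable {R : Type*} {L : Type*} [CommRing R] [LieRing L] [LieAlgebra R L]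

lemma myBraSpan_mono {S S' T T' : Set L} (hS : S ⊆ S') (hT : T ⊆ T') :
    braSpan R S T ≤ braSpan R S' T' :=
  Submodule.span_mono (by rintro z ⟨x, hx, y, hy, rfl⟩; exact ⟨x, hS hx, y, hT hy, rfl⟩)

lemma myIterBra_mono {S S' T T' : Set L} (hS : S ⊆ S') (hT : T ⊆ T') :
    ∀ n, iterBra R S T n ≤ iterBra R S' T' n
  | 0 => Submodule.span_mono hS
  | (n + 1) =>
    myBraSpan_mono (SetLike.coe_subset_coe.mpr (myIterBra_mono hS hT n)) hT

lemma myBraSpan_bot (T : Set L) : braSpan R ((⊥ : Submodule R L) : Set L) T = ⊥ := by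
  apply le_bot_iff.mp
  apply Submodule.span_le.mpr
  rintro z ⟨x, hx, y, hy, rfl⟩
  rw [SetLike.mem_coe, Submodule.mem_bot] at hx
  subst hx
  simp [zero_lie]

lemma myIterBra_bot_mono {S T : Set L} {n : ℕ} (h : iterBra R S T n = ⊥) :
    ∀ m, n ≤ m → iterBra R S T m = ⊥ := by
  intro m hm
  induction m, hm using Nat.le_induction with
  | base => exact h
  | succ m hm ih =>
    show braSpan R _ T = ⊥
    rw [ih]
    exact myBraSpan_bot T

/-- left-normed bracket fold -/
def braL (c : L) (l : List L) : L := l.foldl (fun w v => ⁅w, v⁆) c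

@[simp] lemma braL_nil (c : L) : braL c [] = c := rfl

@[simp] lemma braL_cons (c v : L) (l : List L) : braL c (v :: l) = braL ⁅c, v⁆ l := rfl

lemma braL_append (c : L) (l₁ l₂ : List L) : braL c (l₁ ++ l₂) = braL (braL c l₁) l₂ :=
  List.foldl_append

lemma braL_zero : ∀ l : List L, braL (0 : L) l = 0
  | [] => rfl
  | v :: l => by rw [braL_cons, zero_lie]; exact braL_zero l

end Helpers

section Meta
variable {R : Type*} {L : Type*} [CommRing R] [LieRing L] [LieAlgebra R L]
variable (M : Submodule R L) (hbM : ∀ x y : L, ⁅x, y⁆ ∈ M)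
  (hMM : ∀ w ∈ M, ∀ m ∈ M, ⁅w, m⁆ = (0 : L))
include hbM hMM

lemma my_swap {w : L} (hw : w ∈ M) (u v : L) : ⁅⁅w, u⁆, v⁆ = ⁅⁅w, v⁆, u⁆ := by
  have h0 : ⁅w, ⁅u, v⁆⁆ = (0 : L) := hMM w hw _ (hbM u v)
  have h1 : (0 : L) = ⁅⁅w, u⁆, v⁆ + ⁅u, ⁅w, v⁆⁆ := by rw [← leibniz_lie, h0]
  have h2 : ⁅u, ⁅w, v⁆⁆ = -⁅⁅w, v⁆, u⁆ := (lie_skew _ _).symm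
  rw [h2] at h1
  exact eq_of_sub_eq_zero (by rw [sub_eq_add_neg]; exact h1.symm)

lemma my_move (v : L) : ∀ (l : List L) (w : L), w ∈ M → braL w (l ++ [v]) = braL w (v :: l) := by
  intro l
  induction l with
  | nil => intro w hw; rfl
  | cons u l ih =>
    intro w hw
    rw [List.cons_append, braL_cons, ih ⁅w, u⁆ (hbM w u), braL_cons, braL_cons, braL_cons,
      my_swap M hbM hMM hw u v]

lemma my_pull (v : L) (l₁ l₂ : List L) {w : L} (hw : w ∈ M) :
    braL w (l₁ ++ v :: l₂) = braL w (v :: (l₁ ++ l₂)) := by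
  have h : l₁ ++ v :: l₂ = (l₁ ++ [v]) ++ l₂ := by simp
  rw [h, braL_append, my_move M hbM hMM v l₁ w hw, ← braL_append, List.cons_append]

lemma my_partition (q : L → Bool) : ∀ (l : List L) (w : L), w ∈ M →
    braL w l = braL w (l.filter q ++ l.filter (fun v => !(q v))) := by
  intro l
  induction l with
  | nil => intro w hw; rfl
  | cons v l ih =>
    intro w hw
    by_cases hq : q v = true
    · rw [List.filter_cons_of_pos hq, List.filter_cons_of_neg (by simp [hq]),
        List.cons_append, braL_cons, braL_cons, ih ⁅w, v⁆ (hbM w v)]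
    · rw [List.filter_cons_of_neg (by simpa using hq), List.filter_cons_of_pos (by simp [hq]),
        my_pull M hbM hMM v _ _ hw, braL_cons, braL_cons, ih ⁅w, v⁆ (hbM w v)]

omit M hbM hMM in
lemma my_chain (S T : Set L) :
    ∀ (l : List L) (c : L), c ∈ Submodule.span R S → (∀ v ∈ l, v ∈ T) →
      braL c l ∈ iterBra R S T l.length := by
  intro l
  induction l using List.reverseRecOn with
  | nil => intro c hc _; exact hc
  | append_singleton l v ih =>
    intro c hc hl
    rw [braL_append]
    have hlen : (l ++ [v]).length = l.length + 1 := by simp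
    rw [hlen]
    show ⁅braL c l, v⁆ ∈ braSpan R _ _
    exact Submodule.subset_span
      ⟨braL c l, ih c hc (fun u hu => hl u (by simp [hu])), v, hl v (by simp), rfl⟩

end Meta

section Comb

variable {R : Type*} {L : Type*} [CommRing R] [LieRing L] [LieAlgebra R L]

omit [CommRing R] [LieAlgebra R L] in
lemma my_length_sum {p : ℕ} [NeZero p] (χ : L → ZMod p) :
    ∀ l : List L, l.length = ∑ i : ZMod p, (l.filter (fun v => χ v = i)).length := by
  intro l
  induction l with
  | nil => simp
  | cons v l ih =>
    have hstep : ∀ i : ZMod p,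
        ((v :: l).filter (fun u => χ u = i)).length
          = (l.filter (fun u => χ u = i)).length + (if χ v = i then 1 else 0) := by
      intro i
      by_cases h : χ v = i
      · rw [List.filter_cons_of_pos (by simp [h]), if_pos h]; simp
      · rw [List.filter_cons_of_neg (by simp [h]), if_neg h, Nat.add_zero]
    simp only [hstep, Finset.sum_add_distrib, Finset.sum_ite_eq, Finset.mem_univ, if_true]
    simp [← ih]

lemma my_bra_zero
    (M : Submodule R L) (hbM : ∀ x y : L, ⁅x, y⁆ ∈ M)
    (hMM : ∀ w ∈ M, ∀ m ∈ M, ⁅w, m⁆ = (0 : L))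
    {p : ℕ} [NeZero p]
    (cls : ZMod p → Submodule R L) (Cs : ZMod p → Set L)
    (hclsC : ∀ i, (cls i : Set L) ⊆ Cs i)
    (d : ℕ)
    (hkill : ∀ i, iterBra R (Cs i) (Cs i) d = ⊥)
    (c : L) (hcM : c ∈ M) (hcC : ∀ i, c ∈ Cs i)
    (l : List L) (hl : ∀ v ∈ l, ∃ i, v ∈ cls i)
    (hlen : p * (d - 1) + 1 ≤ l.length) :
    braL c l = 0 := by
  classical
  -- choose a class for each element
  set χ : L → ZMod p := fun v => if h : ∃ i, v ∈ cls i then h.choose else 0 with hχdef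
  have hχ : ∀ v, (∃ i, v ∈ cls i) → v ∈ cls (χ v) := by
    intro v h
    rw [hχdef]
    dsimp only
    rw [dif_pos h]
    exact h.choose_spec
  -- pigeonhole
  have hcard : Fintype.card (ZMod p) = p := ZMod.card p
  have hpigeon : ∃ i : ZMod p, d ≤ (l.filter (fun v => χ v = i)).length := by
    by_contra hcon
    push_neg at hcon
    have hle : ∀ i : ZMod p, (l.filter (fun v => χ v = i)).length ≤ d - 1 := by
      intro i
      have := hcon i
      omega
    have hsum : ∑ i : ZMod p, (l.filter (fun v => χ v = i)).length ≤ p * (d - 1) := by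
      calc ∑ i : ZMod p, (l.filter (fun v => χ v = i)).length
          ≤ ∑ _i : ZMod p, (d - 1) := Finset.sum_le_sum (fun i _ => hle i)
        _ = Fintype.card (ZMod p) * (d - 1) := by
            rw [Finset.sum_const, smul_eq_mul, Finset.card_univ]
        _ = p * (d - 1) := by rw [hcard]
    have := my_length_sum χ l
    omega
  obtain ⟨i, hi⟩ := hpigeon
  -- partition
  set A : List L := l.filter (fun v => χ v = i) with hA
  set B : List L := l.filter (fun v => !(decide (χ v = i))) with hB
  have hpart : braL c l = braL c (A ++ B) :=
    my_partition M hbM hMM (fun v => decide (χ v = i)) l c hcM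
  have hAmem : ∀ v ∈ A, v ∈ Cs i := by
    intro v hv
    rw [hA, List.mem_filter] at hv
    have hvi : χ v = i := by simpa using hv.2
    have := hχ v (hl v hv.1)
    rw [hvi] at this
    exact hclsC i this
  -- kill the first d entries of A
  have htake : braL c (A.take d) = 0 := by
    have hmem : braL c (A.take d) ∈ iterBra R (Cs i) (Cs i) ((A.take d).length) :=
      my_chain (Cs i) (Cs i) (A.take d) c (Submodule.subset_span (hcC i))
        (fun v hv => hAmem v (List.mem_of_mem_take hv))
    have hlen' : (A.take d).length = d := by
      rw [List.length_take]
      omega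
    rw [hlen', hkill i] at hmem
    simpa using hmem
  have hAzero : braL c A = 0 := by
    conv_lhs => rw [← List.take_append_drop d A]
    rw [braL_append, htake, braL_zero]
  rw [hpart, braL_append, hAzero, braL_zero]

end Comb

section SpanBound

variable {R : Type*} {L : Type*} [CommRing R] [LieRing L] [LieAlgebra R L]

lemma my_iterBra_le_span {p : ℕ} (S0 T : Set L) (cls : ZMod p → Submodule R L)
    (hT : T ⊆ ((⨆ i, cls i : Submodule R L) : Set L)) :
    ∀ n, iterBra R S0 T n ≤ Submodule.span R
      {w | ∃ c ∈ S0, ∃ l : List L, l.length = n ∧ (∀ v ∈ l, ∃ i, v ∈ cls i) ∧ braL c l = w} := by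
  intro n
  induction n with
  | zero =>
    apply Submodule.span_mono
    intro c hc
    exact ⟨c, hc, [], rfl, by simp, rfl⟩
  | succ n ih =>
    show braSpan R _ _ ≤ _
    apply Submodule.span_le.mpr
    rintro z ⟨x, hx, y, hy, rfl⟩
    rw [SetLike.mem_coe] at hx
    have hx' := ih hx
    have hy' : y ∈ ⨆ i, cls i := hT hy
    refine Submodule.iSup_induction (motive := fun u => ⁅x, u⁆ ∈ Submodule.span R
      {w | ∃ c ∈ S0, ∃ l : List L, l.length = n + 1 ∧ (∀ v ∈ l, ∃ i, v ∈ cls i) ∧ braL c l = w})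
      cls hy' ?_ ?_ ?_
    · intro i u hu
      refine Submodule.span_induction
        (p := fun z _ => ⁅z, u⁆ ∈ Submodule.span R
          {w | ∃ c ∈ S0, ∃ l : List L, l.length = n + 1 ∧ (∀ v ∈ l, ∃ i, v ∈ cls i) ∧ braL c l = w})
        ?_ ?_ ?_ ?_ hx'
      · rintro z ⟨c, hc, l, hlen, hcls, rfl⟩
        apply Submodule.subset_span
        refine ⟨c, hc, l ++ [u], by simp [hlen], ?_, ?_⟩
        · intro v hv
          rcases List.mem_append.mp hv with h | h
          · exact hcls v h
          · rw [List.mem_singleton.mp h]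
            exact ⟨i, hu⟩
        · rw [braL_append]
          rfl
      · simp only [zero_lie]; exact Submodule.zero_mem _
      · intro a b _ _ ha hb
        rw [add_lie]; exact Submodule.add_mem _ ha hb
      · intro r a _ ha
        rw [smul_lie]; exact Submodule.smul_mem _ r ha
    · simp only [lie_zero]; exact Submodule.zero_mem _
    · intro a b ha hb
      rw [lie_add]; exact Submodule.add_mem _ ha hb

end SpanBound

/-- Standing setup: a supersolvable Frobenius group `FH` (the finite group `A` with kernel
`F` elementary abelian of order `p^2` and cyclic complement `H` of order `q`), a subgroup
`Z ≤ F` of order `p` normal in `FH` with generator `φ`, a finite commutative ring `R` with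
a primitive `p`-th root of unity `ω` in which `p` is invertible, a Lie algebra `L` over `R`
on which `FH` acts by Lie-algebra automorphisms via `ρ`, and the eigenspace decomposition
`L = ⊕_{i ∈ ℤ/pℤ} L_i` of `ρ φ`.  If moreover `L` is metabelian and `C_L(x)` is nilpotent
of class at most `d` for every `x ∈ F^#`, then, with `L'_F = [L, L] ∩ C_L(F)` and
`k = p^2 - p`, for every `a ∈ ℤ/pℤ` one has `[L'_F, L_a, …, L_a] = 0` with `L_a`
occurring `k * (d - 1) + 1` times. -/
theorem metabelian_bracket_of_derived_kernel_fixed_points_vanishes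
    (p : ℕ) (hp : p.Prime)
    (A : Type*) [Group A] [Finite A] (F H : Subgroup A)
    (hFnorm : F.Normal) (hFH : F ⊓ H = ⊥) (hFHtop : F ⊔ H = ⊤)
    (hFnt : F ≠ ⊥) (hHnt : H ≠ ⊥)
    (hfrob : ∀ x ∈ H, x ≠ 1 → ∀ f ∈ F, x * f = f * x → f = 1)
    (hss : IsSupersolvable A)
    (hFcard : Nat.card F = p ^ 2) (hFexp : ∀ f ∈ F, f ^ p = 1)
    (hFab : ∀ f ∈ F, ∀ g ∈ F, f * g = g * f)
    (q : ℕ) (hHcard : Nat.card H = q) (hHcyc : IsCyclic H)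
    (Z : Subgroup A) (hZF : Z ≤ F) (hZnorm : Z.Normal) (hZcard : Nat.card Z = p)
    (φ : A) (hφZ : φ ∈ Z) (hφgen : Z ≤ Subgroup.zpowers φ)
    (R : Type*) [CommRing R] [Finite R]
    (ω : R) (hω : IsPrimitiveRoot ω p) (hpu : IsUnit (p : R))
    (L : Type*) [LieRing L] [LieAlgebra R L]
    (ρ : A → (L ≃ₗ⁅R⁆ L))
    (hρone : ∀ x : L, ρ 1 x = x)
    (hρmul : ∀ g₁ g₂ : A, ∀ x : L, ρ (g₁ * g₂) x = ρ g₁ (ρ g₂ x))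
    (Li : ZMod p → Submodule R L)
    (hLi : ∀ i : ZMod p, Li i = eigSp (ρ φ) (ω ^ i.val))
    (hdec : DirectSum.IsInternal Li)
    (hmeta : braSpan R ((braSpan R Set.univ Set.univ : Submodule R L) : Set L)
      ((braSpan R Set.univ Set.univ : Submodule R L) : Set L) = ⊥)
    (d : ℕ)
    (hd : ∀ x ∈ F, x ≠ 1 →
      iterBra R (fixSub ρ {x} : Set L) (fixSub ρ {x} : Set L) d = ⊥) :
    ∀ a : ZMod p,
      iterBra R ((braSpan R Set.univ Set.univ ⊓ fixSub ρ (F : Set A) : Submodule R L) : Set L)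
        (Li a : Set L) ((p ^ 2 - p) * (d - 1) + 1) = ⊥ := by
  intro a
  haveI : Fact p.Prime := ⟨hp⟩
  haveI : NeZero p := ⟨hp.ne_zero⟩
  haveI : Fact (1 < p) := ⟨hp.one_lt⟩
  have hp2 : 2 ≤ p := hp.two_le
  have hφF : φ ∈ F := hZF hφZ
  have hφ1 : φ ≠ 1 := by
    intro h
    rw [h] at hφgen
    have h1 : Z ≤ ⊥ := by rwa [Subgroup.zpowers_one_eq_bot] at hφgen
    have hZbot : Z = ⊥ := le_bot_iff.mp h1
    rw [hZbot] at hZcard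
    simp only [Subgroup.card_bot] at hZcard
    omega
  have hbM : ∀ x y : L, ⁅x, y⁆ ∈ braSpan R (Set.univ : Set L) Set.univ :=
    fun x y => Submodule.subset_span ⟨x, trivial, y, trivial, rfl⟩
  have hMM : ∀ w ∈ braSpan R (Set.univ : Set L) Set.univ,
      ∀ m ∈ braSpan R (Set.univ : Set L) Set.univ, ⁅w, m⁆ = (0 : L) := by
    intro w hw m hm
    have h : ⁅w, m⁆ ∈ braSpan R ((braSpan R (Set.univ : Set L) Set.univ : Submodule R L) : Set L)
        ((braSpan R (Set.univ : Set L) Set.univ : Submodule R L) : Set L) :=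
      Submodule.subset_span ⟨w, hw, m, hm, rfl⟩
    rw [hmeta] at h
    simpa using h
  have hpp : p ^ 2 = p * p := sq p
  have hple : p ≤ p ^ 2 - p := by
    have h1 : 2 * p ≤ p * p := Nat.mul_le_mul_right p hp2
    omega
  by_cases ha : a = 0
  · -- case a = 0 : everything is fixed by φ
    subst ha
    have hC := hd φ hφF hφ1
    have hsub1 : ((braSpan R Set.univ Set.univ ⊓ fixSub ρ (F : Set A) : Submodule R L) : Set L)
        ⊆ (fixSub ρ {φ} : Set L) := by
      intro x hx
      rw [SetLike.mem_coe, Submodule.mem_inf] at hx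
      intro g hg
      rw [Set.mem_singleton_iff] at hg
      rw [hg]
      exact hx.2 φ hφF
    have hsub2 : ((Li 0 : Submodule R L) : Set L) ⊆ (fixSub ρ {φ} : Set L) := by
      intro x hx
      rw [SetLike.mem_coe, hLi 0] at hx
      have hx' : ρ φ x = ω ^ (0 : ZMod p).val • x := hx
      rw [ZMod.val_zero, pow_zero, one_smul] at hx'
      intro g hg
      rw [Set.mem_singleton_iff] at hg
      rw [hg]
      exact hx'
    have hdle : d ≤ (p ^ 2 - p) * (d - 1) + 1 := by
      rcases Nat.eq_zero_or_pos d with h | h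
      · omega
      · have h1 : d - 1 ≤ (p ^ 2 - p) * (d - 1) :=
          Nat.le_mul_of_pos_left _ (by omega)
        omega
    apply le_bot_iff.mp
    refine le_trans (myIterBra_mono hsub1 hsub2 _) ?_
    exact le_of_eq (myIterBra_bot_mono hC _ hdle)
  · -- main case a ≠ 0
    -- choose t ∈ F \ Z
    obtain ⟨t, htF, htZ⟩ : ∃ t, t ∈ F ∧ t ∉ Z := by
      by_contra hcon
      push_neg at hcon
      have hFZ : F = Z := le_antisymm (fun x hx => hcon x hx) hZF
      rw [hFZ, hZcard] at hFcard
      nlinarith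
    set ζ : R := ω ^ a.val with hζ
    have hvalmem : ∀ x : L, x ∈ Li a ↔ ρ φ x = ζ • x := by
      intro x
      rw [hLi a]
      exact Iff.rfl
    have hζp : ζ ^ p = 1 := by
      rw [hζ, ← pow_mul, mul_comm a.val p, pow_mul, hω.pow_eq_one, one_pow]
    have hpow : ∀ x : ℕ, ζ ^ (x % p) = ζ ^ x := by
      intro x
      conv_rhs => rw [← Nat.div_add_mod x p]
      rw [pow_add, pow_mul, hζp, one_pow, one_mul]
    have hpow2 : ∀ x y : ℕ, x % p = y % p → ζ ^ x = ζ ^ y := by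
      intro x y hxy
      rw [← hpow x, ← hpow y, hxy]
    set ch : ZMod p → R := fun b => ζ ^ b.val with hchdef
    have hch : ∀ b : ZMod p, ch b = ζ ^ b.val := fun _ => rfl
    have hch0 : ch 0 = 1 := by rw [hch, ZMod.val_zero, pow_zero]
    have hch1 : ch 1 = ζ := by rw [hch, ZMod.val_one, pow_one]
    have hchadd : ∀ b c : ZMod p, ch (b + c) = ch b * ch c := by
      intro b c
      rw [hch, hch, hch, ZMod.val_add, hpow, pow_add]
    set σ : R := ∑ i : ZMod p, ch i with hσdef
    have hσζ : σ * ζ = σ := by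
      rw [hσdef, Finset.sum_mul]
      calc ∑ i : ZMod p, ch i * ζ = ∑ i : ZMod p, ch (i + 1) :=
            Finset.sum_congr rfl (fun i _ => by rw [hchadd, hch1])
        _ = ∑ i : ZMod p, ch i :=
            Fintype.sum_equiv (Equiv.addRight (1 : ZMod p)) _ _ (fun i => rfl)
    have hσu : ∀ u : ZMod p, u ≠ 0 → ∑ i : ZMod p, ch (i * u) = σ := by
      intro u hu
      rw [hσdef]
      exact Fintype.sum_equiv (Equiv.mulRight₀ u hu) _ _ (fun i => rfl)
    -- stability of Li a under F
    have hstab : ∀ g ∈ F, ∀ x ∈ Li a, ρ g x ∈ Li a := by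
      intro g hg x hx
      rw [hvalmem] at hx ⊢
      calc ρ φ (ρ g x) = ρ (φ * g) x := (hρmul φ g x).symm
        _ = ρ (g * φ) x := by rw [hFab φ hφF g hg]
        _ = ρ g (ρ φ x) := hρmul g φ x
        _ = ρ g (ζ • x) := by rw [hx]
        _ = ζ • ρ g x := (ρ g).toLieHom.map_smul ζ x
    have hφpow : ∀ k : ℕ, ∀ x ∈ Li a, ρ (φ ^ k) x = ζ ^ k • x := by
      intro k
      induction k with
      | zero =>
        intro x hx
        rw [pow_zero, pow_zero, one_smul]
        exact hρone x
      | succ k ih =>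
        intro x hx
        rw [pow_succ, pow_succ, hρmul, (hvalmem x).mp hx,
          ih (ζ • x) (Submodule.smul_mem _ _ hx), smul_smul]
    have htm : ∀ m : ℕ, ∀ x ∈ Li a, ρ (t ^ m) x ∈ Li a :=
      fun m x hx => hstab (t ^ m) (pow_mem htF m) x hx
    -- σ kills Li a
    have hvan : ∀ x ∈ Li a, σ • x = 0 := by
      intro x hx
      have h1 : σ • x ∈ Li a := Submodule.smul_mem _ _ hx
      have h2 : σ • x ∈ Li 0 := by
        rw [hLi 0]
        show ρ φ (σ • x) = ω ^ (0 : ZMod p).val • (σ • x)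
        rw [ZMod.val_zero, pow_zero, one_smul]
        calc ρ φ (σ • x) = σ • ρ φ x := (ρ φ).toLieHom.map_smul σ x
          _ = σ • (ζ • x) := by rw [(hvalmem x).mp hx]
          _ = (σ * ζ) • x := smul_smul σ ζ x
          _ = σ • x := by rw [hσζ]
      have hdisj : Disjoint (Li 0) (Li a) :=
        hdec.submodule_iSupIndep.pairwiseDisjoint (show (0 : ZMod p) ≠ a from Ne.symm ha)
      exact Submodule.disjoint_def.mp hdisj _ h2 h1
    -- the elements xᵢ = φ^i t and the classes
    have hxiF : ∀ i : ZMod p, φ ^ i.val * t ∈ F := fun i => mul_mem (pow_mem hφF _) htF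
    have hxi1 : ∀ i : ZMod p, φ ^ i.val * t ≠ 1 := by
      intro i h
      have ht' : t = (φ ^ i.val)⁻¹ := eq_inv_of_mul_eq_one_right h
      exact htZ (ht' ▸ inv_mem (pow_mem hφZ i.val))
    set cls : ZMod p → Submodule R L := fun i => fixSub ρ {φ ^ i.val * t} ⊓ Li a with hclsdef
    have hρsum : ∀ (g : A) (s : Finset ℕ) (f : ℕ → L),
        ρ g (∑ m ∈ s, f m) = ∑ m ∈ s, ρ g (f m) := by
      intro g s f
      exact map_sum ((ρ g).toLieHom.toLinearMap) f s
    -- Θ i v is fixed by xᵢ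
    have hΘfix : ∀ (i : ZMod p) (v : L),
        (∑ m ∈ Finset.range p, ρ ((φ ^ i.val * t) ^ m) v) ∈ fixSub ρ {φ ^ i.val * t} := by
      intro i v g hg
      rw [Set.mem_singleton_iff] at hg
      rw [hg]
      have hmap : ρ (φ ^ i.val * t) (∑ m ∈ Finset.range p, ρ ((φ ^ i.val * t) ^ m) v)
          = ∑ m ∈ Finset.range p, ρ ((φ ^ i.val * t) ^ (m + 1)) v := by
        rw [hρsum]
        apply Finset.sum_congr rfl
        intro m _
        rw [← hρmul, ← pow_succ']
      rw [hmap]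
      have h1 := Finset.sum_range_succ' (fun m => ρ ((φ ^ i.val * t) ^ m) v) p
      have h2 := Finset.sum_range_succ (fun m => ρ ((φ ^ i.val * t) ^ m) v) p
      have h3 : ρ ((φ ^ i.val * t) ^ p) v = ρ ((φ ^ i.val * t) ^ 0) v := by
        rw [hFexp _ (hxiF i), pow_zero]
      have h4 := h1.symm.trans h2
      rw [h3] at h4
      exact add_right_cancel h4
    have hΘLi : ∀ (i : ZMod p) (v : L), v ∈ Li a →
        (∑ m ∈ Finset.range p, ρ ((φ ^ i.val * t) ^ m) v) ∈ Li a :=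
      fun i v hv => Submodule.sum_mem _ (fun m _ => hstab _ (pow_mem (hxiF i) m) v hv)
    have hΘval : ∀ (i : ZMod p) (v : L), v ∈ Li a →
        (∑ m ∈ Finset.range p, ρ ((φ ^ i.val * t) ^ m) v)
          = ∑ m ∈ Finset.range p, ch (i * (m : ZMod p)) • ρ (t ^ m) v := by
      intro i v hv
      apply Finset.sum_congr rfl
      intro m _
      have hcomm : Commute (φ ^ i.val) t := Commute.pow_left (hFab φ hφF t htF) i.val
      have hx : (φ ^ i.val * t) ^ m = φ ^ (i.val * m) * t ^ m := by
        rw [hcomm.mul_pow, ← pow_mul]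
      rw [hx, hρmul, hφpow (i.val * m) _ (htm m v hv)]
      congr 1
      -- ζ ^ (i.val * m) = ch (i * ↑m)
      have hv1 : (i * (m : ZMod p)).val = i.val * (m % p) % p := by
        rw [ZMod.val_mul, ZMod.val_natCast]
      rw [hch, hv1, hpow]
      exact hpow2 _ _ (Nat.ModEq.mul_left i.val (Nat.mod_modEq m p)).symm
    -- key identity : p • ρ t v lies in the sum of the classes
    have hkey : ∀ v ∈ Li a, ((p : R)) • ρ t v ∈ (⨆ i : ZMod p, cls i : Submodule R L) := by
      intro v hv
      have hterm : ∀ i : ZMod p,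
          ch (-i) • (∑ m ∈ Finset.range p, ρ ((φ ^ i.val * t) ^ m) v) ∈ ⨆ i, cls i :=
        fun i => Submodule.mem_iSup_of_mem i (Submodule.smul_mem _ _
          (Submodule.mem_inf.mpr ⟨hΘfix i v, hΘLi i v hv⟩))
      have hS : ∑ i : ZMod p, ch (-i) • (∑ m ∈ Finset.range p, ρ ((φ ^ i.val * t) ^ m) v)
          = (p : R) • ρ t v := by
        have e1 : ∀ i : ZMod p,
            ch (-i) • (∑ m ∈ Finset.range p, ρ ((φ ^ i.val * t) ^ m) v)
              = ∑ m ∈ Finset.range p, (ch (-i) * ch (i * (m : ZMod p))) • ρ (t ^ m) v := by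
          intro i
          rw [hΘval i v hv, Finset.smul_sum]
          exact Finset.sum_congr rfl (fun m _ => by rw [smul_smul])
        rw [Finset.sum_congr rfl (fun i _ => e1 i), Finset.sum_comm]
        have e2 : ∀ m ∈ Finset.range p,
            ∑ i : ZMod p, (ch (-i) * ch (i * (m : ZMod p))) • ρ (t ^ m) v
              = (∑ i : ZMod p, ch (i * ((m : ZMod p) - 1))) • ρ (t ^ m) v := by
          intro m _
          rw [Finset.sum_smul]
          apply Finset.sum_congr rfl
          intro i _
          congr 1
          rw [← hchadd]
          congr 1
          ring
        rw [Finset.sum_congr rfl e2]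
        have hzero : ∀ m ∈ Finset.range p, m ≠ 1 →
            (∑ i : ZMod p, ch (i * ((m : ZMod p) - 1))) • ρ (t ^ m) v = 0 := by
          intro m hm hne
          have hu : ((m : ZMod p) - 1) ≠ 0 := by
            intro h0
            rw [sub_eq_zero] at h0
            have hmp := Finset.mem_range.mp hm
            have h1 := congrArg ZMod.val h0
            rw [ZMod.val_natCast, ZMod.val_one, Nat.mod_eq_of_lt hmp] at h1
            exact hne h1
          rw [hσu _ hu]
          exact hvan _ (htm m v hv)
        rw [Finset.sum_eq_single_of_mem 1 (Finset.mem_range.mpr hp.one_lt) hzero]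
        have hc1 : ((1 : ℕ) : ZMod p) - 1 = 0 := by
          rw [Nat.cast_one, sub_self]
        rw [hc1]
        simp only [mul_zero, hch0]
        rw [Finset.sum_const, Finset.card_univ, ZMod.card, pow_one, nsmul_eq_mul, mul_one]
      rw [← hS]
      exact Submodule.sum_mem _ (fun i _ => hterm i)
    -- decomposition of Li a into the classes
    have hdecomp : ((Li a : Submodule R L) : Set L) ⊆ ((⨆ i, cls i : Submodule R L) : Set L) := by
      intro y hy
      rw [SetLike.mem_coe] at hy ⊢
      have hvmem : ρ (t ^ (p - 1)) y ∈ Li a := htm (p - 1) y hy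
      have h1 : (p : R) • ρ t (ρ (t ^ (p - 1)) y) ∈ ⨆ i, cls i := hkey _ hvmem
      have h2 : ρ t (ρ (t ^ (p - 1)) y) = y := by
        rw [← hρmul]
        have htp : t * t ^ (p - 1) = t ^ p := by
          rw [← pow_succ']
          congr 1
          omega
        rw [htp, hFexp t htF]
        exact hρone y
      rw [h2] at h1
      obtain ⟨u, hu⟩ := hpu
      have hy2 : y = (↑u⁻¹ : R) • ((p : R) • y) := by
        rw [smul_smul, ← hu, Units.inv_mul, one_smul]
      rw [hy2]
      exact Submodule.smul_mem _ _ h1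
    -- finish : every long bracket is zero
    apply le_bot_iff.mp
    refine le_trans (my_iterBra_le_span _ _ cls hdecomp ((p ^ 2 - p) * (d - 1) + 1)) ?_
    apply Submodule.span_le.mpr
    rintro w ⟨c, hc, l, hlen, hcls, rfl⟩
    rw [SetLike.mem_coe, Submodule.mem_bot]
    have hc' : c ∈ braSpan R (Set.univ : Set L) Set.univ ⊓ fixSub ρ (F : Set A) := hc
    rw [Submodule.mem_inf] at hc'
    have hlen' : p * (d - 1) + 1 ≤ l.length := by
      have h1 : p * (d - 1) ≤ (p ^ 2 - p) * (d - 1) := Nat.mul_le_mul_right _ hple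
      omega
    exact my_bra_zero (braSpan R Set.univ Set.univ) hbM hMM cls
      (fun i => (fixSub ρ {φ ^ i.val * t} : Set L))
      (fun i x hx => (Submodule.mem_inf.mp hx).1)
      d (fun i => hd _ (hxiF i) (hxi1 i))
      c hc'.1
      (fun i g hg => by
        rw [Set.mem_singleton_iff] at hg
        rw [hg]
        exact hc'.2 _ (hxiF i))
      l hcls hlen'
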